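/- Let (P_t) be the Markov semigroup of a Markovian cocycle with periodic measure (ρ_s)_{s∈ℝ} of period τ, and define the sublinear expectation T̃[φ] = sup_{s∈[0,τ)} 𝔼_{ρ_s}[φ] on bounded measurable functions on X. Then T̃ is invariant under (P_t): T̃[P_t φ] = T̃[φ] for all t ≥ 0 and bounded measurable φ. -/

import Mathlib

open MeasureTheory

/-- Fubini for `Measure.bind` for bounded measurable real functions. -/
lemma integral_bind_aux {X : Type*} [MeasurableSpace X]
    (μ : Measure X) [IsProbabilityMeasure μ] (κ : X → Measure X)
    (hκ : Measurable κ) (hκp : ∀ x, IsProbabilityMeasure (κ x))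
    (φ : X → ℝ) (hφ : Measurable φ) (C : ℝ) (hC : ∀ x, |φ x| ≤ C) :
    ∫ x, (∫ y, φ y ∂(κ x)) ∂μ = ∫ y, φ y ∂(μ.bind κ) := by
  rcases isEmpty_or_nonempty X with h | h
  · rw [integral_of_isEmpty, integral_of_isEmpty]
  obtain ⟨x0⟩ := h
  have hC0 : 0 ≤ C := le_trans (abs_nonneg _) (hC x0)
  have hbindprob : IsProbabilityMeasure (μ.bind κ) := by
    constructor
    rw [Measure.bind_apply MeasurableSet.univ hκ.aemeasurable]
    simp [(fun x => (hκp x).measure_univ : ∀ x, κ x Set.univ = 1)]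
  -- integrability of bounded measurable functions w.r.t. probability measures
  have hint : ∀ (ν : Measure X), IsProbabilityMeasure ν → Integrable φ ν := by
    intro ν hν
    exact (integrable_const C).mono' hφ.aestronglyMeasurable
      (ae_of_all _ fun x => by simpa [Real.norm_eq_abs] using hC x)
  set fp : X → ENNReal := fun y => ENNReal.ofReal (φ y) with hfp
  set fm : X → ENNReal := fun y => ENNReal.ofReal (-φ y) with hfm
  have hfpm : Measurable fp := hφ.ennreal_ofReal
  have hfmm : Measurable fm := hφ.neg.ennreal_ofReal
  have hboundp : ∀ (ν : Measure X), IsProbabilityMeasure ν → ∫⁻ y, fp y ∂ν ≤ ENNReal.ofReal C := by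
    intro ν hν
    calc ∫⁻ y, fp y ∂ν ≤ ∫⁻ _, ENNReal.ofReal C ∂ν :=
          lintegral_mono fun y => ENNReal.ofReal_le_ofReal
            (le_trans (le_abs_self _) (hC y))
      _ = ENNReal.ofReal C := by simp [hν.measure_univ]
  have hboundm : ∀ (ν : Measure X), IsProbabilityMeasure ν → ∫⁻ y, fm y ∂ν ≤ ENNReal.ofReal C := by
    intro ν hν
    calc ∫⁻ y, fm y ∂ν ≤ ∫⁻ _, ENNReal.ofReal C ∂ν :=
          lintegral_mono fun y => ENNReal.ofReal_le_ofReal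
            (le_trans (neg_le_abs _) (hC y))
      _ = ENNReal.ofReal C := by simp [hν.measure_univ]
  -- key representation
  have hrep : ∀ (ν : Measure X), IsProbabilityMeasure ν →
      ∫ y, φ y ∂ν = (∫⁻ y, fp y ∂ν).toReal - (∫⁻ y, fm y ∂ν).toReal := by
    intro ν hν
    exact integral_eq_lintegral_pos_part_sub_lintegral_neg_part (hint ν hν)
  set Lp : X → ENNReal := fun x => ∫⁻ y, fp y ∂(κ x) with hLp
  set Lm : X → ENNReal := fun x => ∫⁻ y, fm y ∂(κ x) with hLm
  have hLpm : Measurable Lp := (Measure.measurable_lintegral hfpm).comp hκ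
  have hLmm : Measurable Lm := (Measure.measurable_lintegral hfmm).comp hκ
  have hLpbd : ∀ x, Lp x ≤ ENNReal.ofReal C := fun x => hboundp _ (hκp x)
  have hLmbd : ∀ x, Lm x ≤ ENNReal.ofReal C := fun x => hboundm _ (hκp x)
  have hLpfin : ∀ x, Lp x < ⊤ := fun x => lt_of_le_of_lt (hLpbd x) ENNReal.ofReal_lt_top
  have hLmfin : ∀ x, Lm x < ⊤ := fun x => lt_of_le_of_lt (hLmbd x) ENNReal.ofReal_lt_top
  have hintp : Integrable (fun x => (Lp x).toReal) μ := by
    refine (integrable_const C).mono' (hLpm.ennreal_toReal).aestronglyMeasurable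
      (ae_of_all _ fun x => ?_)
    rw [Real.norm_eq_abs, abs_of_nonneg ENNReal.toReal_nonneg]
    exact ENNReal.toReal_le_of_le_ofReal hC0 (hLpbd x)
  have hintm : Integrable (fun x => (Lm x).toReal) μ := by
    refine (integrable_const C).mono' (hLmm.ennreal_toReal).aestronglyMeasurable
      (ae_of_all _ fun x => ?_)
    rw [Real.norm_eq_abs, abs_of_nonneg ENNReal.toReal_nonneg]
    exact ENNReal.toReal_le_of_le_ofReal hC0 (hLmbd x)
  calc ∫ x, (∫ y, φ y ∂(κ x)) ∂μ
      = ∫ x, ((Lp x).toReal - (Lm x).toReal) ∂μ := by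
        apply integral_congr_ae
        exact ae_of_all _ fun x => hrep (κ x) (hκp x)
    _ = (∫ x, (Lp x).toReal ∂μ) - ∫ x, (Lm x).toReal ∂μ := integral_sub hintp hintm
    _ = (∫⁻ x, Lp x ∂μ).toReal - (∫⁻ x, Lm x ∂μ).toReal := by
        rw [integral_toReal hLpm.aemeasurable (ae_of_all _ hLpfin),
          integral_toReal hLmm.aemeasurable (ae_of_all _ hLmfin)]
    _ = (∫⁻ y, fp y ∂(μ.bind κ)).toReal - (∫⁻ y, fm y ∂(μ.bind κ)).toReal := by
        rw [Measure.lintegral_bind hκ.aemeasurable hfpm.aemeasurable,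
          Measure.lintegral_bind hκ.aemeasurable hfmm.aemeasurable]
    _ = ∫ y, φ y ∂(μ.bind κ) := (hrep _ hbindprob).symm

/-- Supremum of a periodic bounded function over a period equals the full supremum. -/
lemma ciSup_Ico_eq_ciSup {τ : ℝ} (hτ : 0 < τ) (f : ℝ → ℝ)
    (hper : Function.Periodic f τ) (hbdd : BddAbove (Set.range f)) :
    (⨆ s : Set.Ico (0 : ℝ) τ, f (s : ℝ)) = ⨆ s : ℝ, f s := by
  have hne : Nonempty (Set.Ico (0 : ℝ) τ) := ⟨⟨0, by constructor <;> simp [hτ]⟩⟩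
  have hbdd' : BddAbove (Set.range fun s : Set.Ico (0 : ℝ) τ => f (s : ℝ)) := by
    apply hbdd.mono
    rintro _ ⟨s, rfl⟩
    exact ⟨(s : ℝ), rfl⟩
  apply le_antisymm
  · exact ciSup_le fun s => le_ciSup hbdd (s : ℝ)
  · refine ciSup_le fun s => ?_
    have hmem : toIcoMod hτ 0 s ∈ Set.Ico (0 : ℝ) τ := by
      simpa using toIcoMod_mem_Ico hτ 0 s
    have heq : f (toIcoMod hτ 0 s) = f s := by
      rw [toIcoMod]
      exact hper.sub_zsmul_eq _
    calc f s = f (toIcoMod hτ 0 s) := heq.symm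
      _ ≤ ⨆ s : Set.Ico (0 : ℝ) τ, f (s : ℝ) := le_ciSup hbdd' ⟨_, hmem⟩

/-- The sublinear expectation `T̃[φ] = sup_{s ∈ [0,τ)} 𝔼_{ρ_s}[φ]` built from a τ-periodic
measure `(ρ_s)` of a Markov semigroup with transition kernel `p` is invariant under the
semigroup: `T̃[P_t φ] = T̃[φ]` for all `t ≥ 0`, where `(P_t φ)(x) = ∫ φ(y) p(t,x,dy)`. -/
theorem sublinear_expectation_invariant_under_markov_semigroup
    {X : Type*} [TopologicalSpace X] [PolishSpace X] [MeasurableSpace X] [BorelSpace X]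
    (p : ℝ → X → Measure X)
    (hpmeas : ∀ t, Measurable (p t))
    (hpprob : ∀ t x, IsProbabilityMeasure (p t x))
    (hp0 : ∀ x, p 0 x = Measure.dirac x)
    (hChapman : ∀ t s : ℝ, 0 ≤ t → 0 ≤ s → ∀ x : X,
      p (t + s) x = (p s x).bind (p t))
    (ρ : ℝ → Measure X)
    (hρprob : ∀ s, IsProbabilityMeasure (ρ s))
    (τ : ℝ) (hτ : 0 < τ)
    (hρper : ∀ s : ℝ, ρ (s + τ) = ρ s)
    (hρevolve : ∀ (s t : ℝ), 0 ≤ t → (ρ s).bind (p t) = ρ (s + t))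
    (t : ℝ) (ht : 0 ≤ t)
    (φ : X → ℝ) (hφmeas : Measurable φ) (hφbdd : ∃ C : ℝ, ∀ x, |φ x| ≤ C) :
    (⨆ s : Set.Ico (0 : ℝ) τ, ∫ x, (∫ y, φ y ∂(p t x)) ∂(ρ (s : ℝ))) =
    ⨆ s : Set.Ico (0 : ℝ) τ, ∫ x, φ x ∂(ρ (s : ℝ)) := by
  obtain ⟨C, hC⟩ := hφbdd
  rcases isEmpty_or_nonempty X with h | h
  · exact absurd (hρprob 0).measure_univ (by simp [Set.univ_eq_empty_iff.2 h])
  obtain ⟨x0⟩ := h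
  have hC0 : 0 ≤ C := le_trans (abs_nonneg _) (hC x0)
  set g : ℝ → ℝ := fun s => ∫ x, φ x ∂(ρ s) with hg
  -- pointwise identity: P_t-integral against ρ_s equals integral against ρ_{s+t}
  have hkey : ∀ s : ℝ, ∫ x, (∫ y, φ y ∂(p t x)) ∂(ρ s) = g (s + t) := by
    intro s
    haveI := hρprob s
    have := integral_bind_aux (ρ s) (p t) (hpmeas t) (hpprob t) φ hφmeas C hC
    rw [this, hρevolve s t ht]
  -- boundedness of g
  have hgbd : ∀ s, |g s| ≤ C := by
    intro s
    haveI := hρprob s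
    have : ‖∫ x, φ x ∂(ρ s)‖ ≤ C * ((ρ s) Set.univ).toReal :=
      norm_integral_le_of_norm_le_const
        (ae_of_all _ fun x => by simpa [Real.norm_eq_abs] using hC x)
    simpa [Real.norm_eq_abs, measure_univ] using this
  have hgbdd : BddAbove (Set.range g) := by
    refine ⟨C, ?_⟩
    rintro _ ⟨s, rfl⟩
    exact le_trans (le_abs_self _) (hgbd s)
  have hgper : Function.Periodic g τ := fun s => by simp only [hg]; rw [hρper s]
  -- shifted function
  have hg'per : Function.Periodic (fun s => g (s + t)) τ := fun s => by
    simp only []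
    rw [add_right_comm]
    exact hgper (s + t)
  have hg'bdd : BddAbove (Set.range fun s => g (s + t)) := by
    apply hgbdd.mono
    rintro _ ⟨s, rfl⟩
    exact ⟨s + t, rfl⟩
  have hrange : (Set.range fun s => g (s + t)) = Set.range g := by
    ext y
    constructor
    · rintro ⟨s, rfl⟩; exact ⟨s + t, rfl⟩
    · rintro ⟨s, rfl⟩; exact ⟨s - t, by simp⟩
  calc (⨆ s : Set.Ico (0 : ℝ) τ, ∫ x, (∫ y, φ y ∂(p t x)) ∂(ρ (s : ℝ)))
      = ⨆ s : Set.Ico (0 : ℝ) τ, g ((s : ℝ) + t) := by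
        congr 1; funext s; exact hkey s
    _ = ⨆ s : ℝ, g (s + t) := ciSup_Ico_eq_ciSup hτ _ hg'per hg'bdd
    _ = ⨆ s : ℝ, g s := by rw [iSup, iSup, hrange]
    _ = ⨆ s : Set.Ico (0 : ℝ) τ, g (s : ℝ) := (ciSup_Ico_eq_ciSup hτ g hgper hgbdd).symm
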